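/- A connected bipartite graph G admits a 2-layer 0-planar drawing (a 2-layer drawing with no crossings) if and only if G is a caterpillar. -/

import Mathlib

set_option linter.unusedSectionVars false

open Function

section AuxLemmas
open SimpleGraph Walk
variable {V : Type*} {G : SimpleGraph V}

lemma aux_two_nbrs [Fintype V] [DecidableEq V] [DecidableRel G.Adj] {x a b : V}
    (ha : G.Adj x a) (hb : G.Adj x b) (hab : a ≠ b) : 2 ≤ G.degree x := by
  have : ({a, b} : Finset V) ⊆ G.neighborFinset x := by
    intro z hz
    simp only [Finset.mem_insert, Finset.mem_singleton] at hz
    rcases hz with rfl | rfl <;> simp [SimpleGraph.mem_neighborFinset, ha, hb]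
  calc 2 = ({a, b} : Finset V).card := by rw [Finset.card_insert_of_notMem (by simpa), Finset.card_singleton]
  _ ≤ _ := Finset.card_le_card this
  _ = G.degree x := rfl

lemma aux_exists_other [Fintype V] [DecidableEq V] [DecidableRel G.Adj] {x : V}
    (hx : 2 ≤ G.degree x) (w : V) : ∃ z, G.Adj x z ∧ z ≠ w := by
  have h2 : 1 ≤ ((G.neighborFinset x).erase w).card := by
    have := Finset.pred_card_le_card_erase (s := G.neighborFinset x) (a := w)
    have hd : 2 ≤ (G.neighborFinset x).card := hx
    omega
  obtain ⟨z, hz⟩ := Finset.card_pos.mp h2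
  refine ⟨z, ?_, ?_⟩
  · have := Finset.mem_of_mem_erase hz
    rwa [SimpleGraph.mem_neighborFinset] at this
  · exact Finset.ne_of_mem_erase hz

lemma aux_append_path {u v w : V} {p : G.Walk u v} {q : G.Walk v w}
    (hp : p.IsPath) (hq : q.IsPath) (h : ∀ y ∈ p.support, y ∈ q.support → y = v) :
    (p.append q).IsPath := by
  rw [Walk.isPath_def, Walk.support_append]
  refine List.Nodup.append hp.support_nodup ?_ ?_
  · have := hq.support_nodup
    rw [q.support_eq_cons] at this
    exact this.of_cons
  · intro y hy hy'
    have hyv : y = v := h y hy (List.mem_of_mem_tail hy')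
    subst hyv
    have := hq.support_nodup
    rw [q.support_eq_cons] at this
    exact (List.nodup_cons.mp this).1 hy'

lemma aux_internal {x : V} : ∀ {u v : V} (p : G.Walk u v), p.IsPath → x ∈ p.support →
    x ≠ u → x ≠ v →
    ∃ n1 n2, n1 ≠ n2 ∧ G.Adj x n1 ∧ G.Adj x n2 ∧ n1 ∈ p.support ∧ n2 ∈ p.support
  | u, _, Walk.nil, hp, hx, hxu, hxv => by simp at hx; exact absurd hx hxu
  | u, v, Walk.cons (v := b) h p, hp, hx, hxu, hxv => by
    rw [Walk.support_cons] at hx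
    rcases List.mem_cons.mp hx with rfl | hx'
    · exact absurd rfl hxu
    · rcases eq_or_ne x b with rfl | hxb
      · cases p with
        | nil => exact absurd rfl hxv
        | @cons b' y c' h2 p2 =>
          refine ⟨u, y, ?_, h.symm, h2, by simp, by simp⟩
          rintro rfl
          have := ((Walk.cons_isPath_iff _ _).mp hp).2
          simp at this
      · obtain ⟨n1, n2, h12, ha1, ha2, hm1, hm2⟩ :=
          aux_internal p ((Walk.cons_isPath_iff _ _).mp hp).1 hx' hxb hxv
        exact ⟨n1, n2, h12, ha1, ha2, by simp [hm1], by simp [hm2]⟩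

lemma aux_meet {u : V} (L : List V) (hu : u ∈ L) :
    ∀ {x} (r : G.Walk x u), r.IsPath →
    ∃ (m : V) (q : G.Walk x m), q.IsPath ∧ m ∈ L ∧ q.support ⊆ r.support ∧
      ∀ y ∈ q.support, y ∈ L → y = m
  | _, Walk.nil, hr => ⟨u, Walk.nil, Walk.IsPath.nil, hu, by simp, by simp⟩
  | x, Walk.cons (v := b) h r, hr => by
    by_cases hxL : x ∈ L
    · exact ⟨x, Walk.nil, Walk.IsPath.nil, hxL, by simp, by simp⟩
    · obtain ⟨m, q, hq, hmL, hsub, hprop⟩ := aux_meet L hu r ((Walk.cons_isPath_iff _ _).mp hr).1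
      refine ⟨m, Walk.cons h q, hq.cons ?_, hmL, ?_, ?_⟩
      · intro hmem
        exact ((Walk.cons_isPath_iff _ _).mp hr).2 (hsub hmem)
      · intro y hy
        rw [Walk.support_cons] at hy ⊢
        rcases List.mem_cons.mp hy with rfl | hy'
        · simp
        · simp [hsub hy']
      · intro y hy hyL
        rw [Walk.support_cons] at hy
        rcases List.mem_cons.mp hy with rfl | hy'
        · exact absurd hyL hxL
        · exact hprop y hy' hyL

lemma aux_extc {x : V} {d : G.Walk x x} (hd : d.IsCycle) :
    ∃ (y1 z1 y2 z2 : V), G.Adj x y1 ∧ G.Adj y1 z1 ∧ G.Adj x y2 ∧ G.Adj z2 y2 ∧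
      z1 ∈ d.support ∧ z2 ∈ d.support ∧ z1 ≠ x ∧ z2 ≠ x ∧ y1 ≠ y2 := by
  have hlen := hd.three_le_length
  cases d with
  | nil => exact absurd hd Walk.IsCycle.not_of_nil
  | @cons _ y1 _ h1 e =>
    cases e with
    | nil => simp at hlen
    | @cons _ z1 _ h2 r =>
      have hlr : 1 ≤ r.length := by
        simp [Walk.length_cons] at hlen ⊢; omega
      have htail : (y1 :: z1 :: r.support.tail).Nodup := by
        have := hd.2
        rwa [Walk.support_cons, List.tail_cons, Walk.support_cons, r.support_eq_cons] at this
      have hesupp : (Walk.cons h2 r).support.Nodup := by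
        rw [Walk.support_cons, r.support_eq_cons]
        exact htail
      have hz1x : z1 ≠ x := by
        rintro rfl
        have hr : r.support.Nodup := by
          rw [r.support_eq_cons]; exact (List.nodup_cons.mp htail).2
        have : r = Walk.nil := Walk.isPath_iff_eq_nil.mp (Walk.IsPath.mk' hr)
        subst this
        simp at hlr
      -- reverse analysis
      set e : G.Walk y1 x := Walk.cons h2 r with he
      have hrevnil : ¬ e.reverse.Nil := by
        rw [Walk.not_nil_iff_lt_length, Walk.length_reverse]
        simp [he, Walk.length_cons]
      obtain ⟨y2, h1', q, heq⟩ := Walk.not_nil_iff.mp hrevnil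
      have hqnil : ¬ q.Nil := by
        rw [Walk.not_nil_iff_lt_length]
        have : e.reverse.length = q.length + 1 := by rw [heq]; simp [Walk.length_cons]
        rw [Walk.length_reverse] at this
        simp [he, Walk.length_cons] at this
        omega
      obtain ⟨z2, h2', q2, heq2⟩ := Walk.not_nil_iff.mp hqnil
      have hrevsupp : e.reverse.support.Nodup := by
        rw [Walk.support_reverse, List.nodup_reverse]
        exact hesupp
      have hsupp_eq : e.reverse.support = x :: y2 :: q2.support := by
        rw [heq, Walk.support_cons, heq2, Walk.support_cons]
      rw [hsupp_eq] at hrevsupp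
      have hz2mem : z2 ∈ q2.support := q2.start_mem_support
      have hy1mem : y1 ∈ q2.support := q2.end_mem_support
      have hxnot : x ∉ y2 :: q2.support := (List.nodup_cons.mp hrevsupp).1
      have hy2not : y2 ∉ q2.support := (List.nodup_cons.mp (List.nodup_cons.mp hrevsupp).2).1
      have hz2d : z2 ∈ (Walk.cons h1 e).support := by
        rw [Walk.support_cons]
        have : z2 ∈ e.reverse.support := by rw [hsupp_eq]; simp [hz2mem]
        rw [Walk.support_reverse, List.mem_reverse] at this
        simp [this]
      refine ⟨y1, z1, y2, z2, h1, h2, h1', h2'.symm, ?_, hz2d, hz1x, ?_, ?_⟩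
      · simp [he, Walk.support_cons]
      · intro hzx; exact hxnot (hzx ▸ List.mem_cons_of_mem _ hz2mem)
      · intro hy; exact hy2not (hy ▸ hy1mem)

section drawing
variable {X : Set V} {π : V → ℕ}

lemma aux_acyclic (hinj : Injective π)
    (hbipX : ∀ a b : V, G.Adj a b → (a ∈ X ↔ b ∉ X))
    (hcross : ∀ a b c d : V, G.Adj a b → G.Adj c d → a ∈ X → c ∈ X →
        s(a, b) ≠ s(c, d) →
        ¬ ((π a < π c ∧ π d < π b) ∨ (π c < π a ∧ π b < π d))) :
    G.IsAcyclic := by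
  classical
  intro v c hc
  -- there is a vertex of the cycle in X
  have hex : ∃ x0 ∈ c.support, x0 ∈ X := by
    cases c with
    | nil => exact absurd hc Walk.IsCycle.not_of_nil
    | @cons _ y _ h e =>
      by_cases hv : v ∈ X
      · exact ⟨v, by simp, hv⟩
      · refine ⟨y, by simp, ?_⟩
        have := hbipX v y h
        tauto
  obtain ⟨x0, hx0m, hx0X⟩ := hex
  set S : Finset V := c.support.toFinset.filter (fun z => z ∈ X) with hS
  have hSne : S.Nonempty := ⟨x0, by simp [hS, hx0m, hx0X]⟩
  obtain ⟨x, hxS, hmax⟩ := S.exists_max_image π hSne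
  have hxm : x ∈ c.support := by simp [hS] at hxS; exact hxS.1
  have hxX : x ∈ X := by simp [hS] at hxS; exact hxS.2
  have hc' := hc.rotate hxm
  have hsub : ∀ y, y ∈ (c.rotate x hxm).support → y ∈ c.support := by
    intro y hy
    rw [Walk.support_eq_cons] at hy
    rcases List.mem_cons.mp hy with rfl | hy'
    · exact hxm
    · have := (Walk.support_rotate c x hxm).mem_iff.mp hy'
      exact List.mem_of_mem_tail this
  obtain ⟨y1, z1, y2, z2, h1, h2, h1', h2', hz1m, hz2m, hz1x, hz2x, hy12⟩ := aux_extc hc'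
  have hy1X : y1 ∉ X := (hbipX _ _ h1).mp hxX
  have hy2X : y2 ∉ X := (hbipX _ _ h1').mp hxX
  have hz1X : z1 ∈ X := by have := hbipX _ _ h2; tauto
  have hz2X : z2 ∈ X := by have := hbipX _ _ h2'; tauto
  have hmz1 : π z1 < π x := by
    have hle : π z1 ≤ π x := hmax z1 (by simp [hS, hsub _ hz1m, hz1X])
    exact lt_of_le_of_ne hle (fun h => hz1x (hinj h))
  have hmz2 : π z2 < π x := by
    have hle : π z2 ≤ π x := hmax z2 (by simp [hS, hsub _ hz2m, hz2X])
    exact lt_of_le_of_ne hle (fun h => hz2x (hinj h))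
  rcases lt_trichotomy (π y1) (π y2) with hy | hy | hy
  · refine hcross z2 y2 x y1 h2' h1 hz2X hxX ?_ (Or.inl ⟨hmz2, hy⟩)
    intro heq
    rw [Sym2.eq_iff] at heq
    rcases heq with ⟨h3, _⟩ | ⟨h3, _⟩
    · exact hz2x h3
    · exact hy1X (h3 ▸ hz2X)
  · exact hy12 (hinj hy)
  · refine hcross z1 y1 x y2 h2.symm h1' hz1X hxX ?_ (Or.inl ⟨hmz1, hy⟩)
    intro heq
    rw [Sym2.eq_iff] at heq
    rcases heq with ⟨h3, _⟩ | ⟨h3, _⟩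
    · exact hz1x h3
    · exact hy2X (h3 ▸ hz1X)

lemma aux_c0 (hinj : Injective π)
    (hbipX : ∀ a b : V, G.Adj a b → (a ∈ X ↔ b ∉ X))
    (hcross : ∀ a b c d : V, G.Adj a b → G.Adj c d → a ∈ X → c ∈ X →
        s(a, b) ≠ s(c, d) →
        ¬ ((π a < π c ∧ π d < π b) ∨ (π c < π a ∧ π b < π d)))
    [Fintype V] [DecidableEq V] [DecidableRel G.Adj]
    {m n1 n2 n3 : V} (hmX : m ∈ X)
    (ha1 : G.Adj m n1) (ha2 : G.Adj m n2) (ha3 : G.Adj m n3)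
    (h12 : π n1 < π n2) (h23 : π n2 < π n3) (hdeg : 2 ≤ G.degree n2) : False := by
  obtain ⟨m', hm', hm'm⟩ := aux_exists_other hdeg m
  have hn2X : n2 ∉ X := (hbipX _ _ ha2).mp hmX
  have hm'X : m' ∈ X := by have := hbipX _ _ hm'; tauto
  have hne : π m' ≠ π m := fun h => hm'm (hinj h)
  rcases hne.lt_or_gt with hlt | hlt
  · refine hcross m' n2 m n1 hm'.symm ha1 hm'X hmX ?_ (Or.inl ⟨hlt, h12⟩)
    intro heq
    rw [Sym2.eq_iff] at heq
    rcases heq with ⟨h3, _⟩ | ⟨h3, _⟩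
    · exact hm'm h3
    · exact ((hbipX _ _ ha1).mp hmX) (h3 ▸ hm'X)
  · refine hcross m n3 m' n2 ha3 hm'.symm hmX hm'X ?_ (Or.inl ⟨hlt, h23⟩)
    intro heq
    rw [Sym2.eq_iff] at heq
    rcases heq with ⟨h3, _⟩ | ⟨h3, _⟩
    · exact hm'm h3.symm
    · exact hn2X (h3 ▸ hmX)

lemma aux_three (hinj : Injective π)
    (hbipX : ∀ a b : V, G.Adj a b → (a ∈ X ↔ b ∉ X))
    (hcross : ∀ a b c d : V, G.Adj a b → G.Adj c d → a ∈ X → c ∈ X →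
        s(a, b) ≠ s(c, d) →
        ¬ ((π a < π c ∧ π d < π b) ∨ (π c < π a ∧ π b < π d)))
    [Fintype V] [DecidableEq V] [DecidableRel G.Adj]
    {m n1 n2 n3 : V}
    (ha1 : G.Adj m n1) (ha2 : G.Adj m n2) (ha3 : G.Adj m n3)
    (h12 : n1 ≠ n2) (h13 : n1 ≠ n3) (h23 : n2 ≠ n3)
    (hd1 : 2 ≤ G.degree n1) (hd2 : 2 ≤ G.degree n2) (hd3 : 2 ≤ G.degree n3) : False := by
  have key : ∀ a b c : V, G.Adj m a → G.Adj m b → G.Adj m c →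
      π a < π b → π b < π c → 2 ≤ G.degree b → False := by
    by_cases hmX : m ∈ X
    · exact fun a b c hA hB hC hab hbc hd => aux_c0 hinj hbipX hcross hmX hA hB hC hab hbc hd
    · set X' : Set V := {v | v ∉ X} with hX'
      have hbipX' : ∀ a b : V, G.Adj a b → (a ∈ X' ↔ b ∉ X') := by
        intro a b hab
        have := hbipX a b hab
        simp only [hX', Set.mem_setOf_eq]
        tauto
      have hcross' : ∀ a b c d : V, G.Adj a b → G.Adj c d → a ∈ X' → c ∈ X' →
          s(a, b) ≠ s(c, d) →
          ¬ ((π a < π c ∧ π d < π b) ∨ (π c < π a ∧ π b < π d)) := by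
        intro a b c d hab hcd haX hcX hne
        have hbX : b ∈ X := by have := hbipX' a b hab; simp only [hX', Set.mem_setOf_eq] at *; tauto
        have hdX : d ∈ X := by have := hbipX' c d hcd; simp only [hX', Set.mem_setOf_eq] at *; tauto
        have hne' : s(b, a) ≠ s(d, c) := by
          rw [Sym2.eq_swap (a := b), Sym2.eq_swap (a := d)]; exact hne
        have := hcross b a d c hab.symm hcd.symm hbX hdX hne'
        tauto
      exact fun a b c hA hB hC hab hbc hd =>
        aux_c0 hinj hbipX' hcross' (by simpa [hX'] using hmX) hA hB hC hab hbc hd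
  have p12 : π n1 ≠ π n2 := fun h => h12 (hinj h)
  have p13 : π n1 ≠ π n3 := fun h => h13 (hinj h)
  have p23 : π n2 ≠ π n3 := fun h => h23 (hinj h)
  rcases p12.lt_or_gt with h1 | h1
  · rcases p23.lt_or_gt with h2 | h2
    · exact key n1 n2 n3 ha1 ha2 ha3 h1 h2 hd2
    · rcases p13.lt_or_gt with h3 | h3
      · exact key n1 n3 n2 ha1 ha3 ha2 h3 h2 hd3
      · exact key n3 n1 n2 ha3 ha1 ha2 h3 h1 hd1
  · rcases p13.lt_or_gt with h3 | h3
    · exact key n2 n1 n3 ha2 ha1 ha3 h1 h3 hd1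
    · rcases p23.lt_or_gt with h2 | h2
      · exact key n2 n3 n1 ha2 ha3 ha1 h2 h3 hd3
      · exact key n3 n2 n1 ha3 ha2 ha1 h2 h1 hd2

end drawing

end AuxLemmas

/-- `G` is a caterpillar: a tree in which the non-leaf vertices (vertices of
degree at least 2) all lie on a single path. -/
def IsCaterpillar {V : Type*} [Fintype V] [DecidableEq V]
    (G : SimpleGraph V) [DecidableRel G.Adj] : Prop :=
  G.IsTree ∧ ∃ (u v : V) (w : G.Walk u v), w.IsPath ∧
    ∀ x : V, 2 ≤ G.degree x → x ∈ w.support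

section AuxLemmas2
open SimpleGraph Walk
variable {V : Type*} {G : SimpleGraph V}

section fwd
variable [Fintype V] [DecidableEq V] [DecidableRel G.Adj] {X : Set V} {π : V → ℕ}

lemma aux_forward (hconn : G.Connected) (hinj : Injective π)
    (hbipX : ∀ a b : V, G.Adj a b → (a ∈ X ↔ b ∉ X))
    (hcross : ∀ a b c d : V, G.Adj a b → G.Adj c d → a ∈ X → c ∈ X →
        s(a, b) ≠ s(c, d) →
        ¬ ((π a < π c ∧ π d < π b) ∨ (π c < π a ∧ π b < π d))) :
    IsCaterpillar G := by
  classical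
  have htree : G.IsTree := ⟨hconn, aux_acyclic hinj hbipX hcross⟩
  refine ⟨htree, ?_⟩
  set pth : ∀ u v : V, G.Walk u v := fun u v => ((hconn.preconnected u v).some).bypass with hpthdef
  have hpth : ∀ u v, (pth u v).IsPath := fun u v => Walk.bypass_isPath _
  have huniq : ∀ (u v : V) (q : G.Walk u v), q.IsPath → q = pth u v := by
    intro u v q hq
    obtain ⟨p0, _, hu0⟩ := htree.existsUnique_path u v
    rw [hu0 q hq, hu0 (pth u v) (hpth u v)]
  by_cases hN : ∃ x, 2 ≤ G.degree x
  · obtain ⟨x0, hx0⟩ := hN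
    set P : Finset (V × V) :=
      Finset.univ.filter (fun p => 2 ≤ G.degree p.1 ∧ 2 ≤ G.degree p.2) with hP
    have hPne : P.Nonempty := ⟨(x0, x0), by simp [hP, hx0]⟩
    obtain ⟨⟨u, v⟩, huvP, hmaxp⟩ := P.exists_max_image (fun p => (pth p.1 p.2).length) hPne
    simp only [hP, Finset.mem_filter, Finset.mem_univ, true_and] at hmaxp huvP
    obtain ⟨hdu, hdv⟩ := huvP
    set p : G.Walk u v := pth u v with hpdef
    have hp : p.IsPath := hpth u v
    refine ⟨u, v, p, hp, ?_⟩
    intro x hx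
    by_contra hxp
    -- every vertex of p.support is a non-leaf
    have hsupN : ∀ y ∈ p.support, 2 ≤ G.degree y := by
      intro y hy
      rcases eq_or_ne y u with rfl | hyu
      · exact hdu
      rcases eq_or_ne y v with rfl | hyv
      · exact hdv
      obtain ⟨n1, n2, h12, ha1, ha2, _, _⟩ := aux_internal p hp hy hyu hyv
      exact aux_two_nbrs ha1 ha2 h12
    obtain ⟨m, q, hq, hmL, hsub, hprop⟩ :=
      aux_meet p.support p.start_mem_support (pth x u) (hpth x u)
    have hxm : x ≠ m := fun h => hxp (h ▸ hmL)
    have hql : 1 ≤ q.length := by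
      rcases Nat.eq_zero_or_pos q.length with h0 | h1
      · exact absurd (Walk.eq_of_length_eq_zero h0) hxm
      · exact h1
    have hqrev : ¬ q.reverse.Nil := by
      rw [Walk.not_nil_iff_lt_length, Walk.length_reverse]; omega
    obtain ⟨n3, hadj3, q2, heq3⟩ := Walk.not_nil_iff.mp hqrev
    have hn3q : n3 ∈ q.support := by
      have : n3 ∈ q.reverse.support := by rw [heq3]; simp
      rwa [Walk.support_reverse, List.mem_reverse] at this
    have hn3m : n3 ≠ m := by
      have hnd : q.reverse.support.Nodup := hq.reverse.support_nodup
      rw [heq3, Walk.support_cons] at hnd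
      intro h
      exact (List.nodup_cons.mp hnd).1 (h ▸ q2.start_mem_support)
    have hn3p : n3 ∉ p.support := fun h => hn3m (hprop n3 hn3q h)
    have hn3N : 2 ≤ G.degree n3 := by
      rcases eq_or_ne n3 x with rfl | hn3x
      · exact hx
      · obtain ⟨a1, a2, h12, hA1, hA2, _, _⟩ := aux_internal q hq hn3q hn3x hn3m
        exact aux_two_nbrs hA1 hA2 h12
    rcases eq_or_ne m u with rfl | hmu
    · -- m = u : extend the path, contradict maximality
      have hcomb : (q.append p).IsPath := aux_append_path hq hp hprop
      have := huniq x v (q.append p) hcomb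
      have hlen : (pth x v).length = q.length + p.length := by
        rw [← this, Walk.length_append]
      have hmax := hmaxp (x, v) (by simp [hP, hx, hdv])
      simp only at hmax
      rw [hlen] at hmax
      omega
    rcases eq_or_ne m v with rfl | hmv
    · have hrev : p.reverse.IsPath := hp.reverse
      have hcomb : (q.append p.reverse).IsPath := by
        refine aux_append_path hq hrev ?_
        intro y hy hy'
        rw [Walk.support_reverse, List.mem_reverse] at hy'
        exact hprop y hy hy'
      have := huniq x u (q.append p.reverse) hcomb
      have hlen : (pth x u).length = q.length + p.length := by
        rw [← this, Walk.length_append, Walk.length_reverse]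
      have hmax := hmaxp (x, u) (by simp [hP, hx, hdu])
      simp only at hmax
      rw [hlen] at hmax
      omega
    · obtain ⟨n1, n2, h12, ha1, ha2, hm1, hm2⟩ := aux_internal p hp hmL hmu hmv
      exact aux_three hinj hbipX hcross hadj3 ha1 ha2
        (fun h => hn3p (h ▸ hm1)) (fun h => hn3p (h ▸ hm2)) h12
        hn3N (hsupN n1 hm1) (hsupN n2 hm2)
  · push_neg at hN
    have : Nonempty V := hconn.nonempty
    obtain ⟨u⟩ := this
    exact ⟨u, u, Walk.nil, Walk.IsPath.nil, fun x hx => absurd hx (by simpa using hN x)⟩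

end fwd

section bwd
variable [Fintype V] [DecidableEq V] [DecidableRel G.Adj]

lemma aux_unique_nbr {x y z : V} (h1 : G.degree x ≤ 1) (ha : G.Adj x y) (hb : G.Adj x z) :
    y = z := by
  by_contra h
  have := aux_two_nbrs ha hb h
  omega

lemma aux_first_step (hconn : G.Connected) {x y : V} (hxy : x ≠ y) : ∃ z, G.Adj x z := by
  have r := (hconn.preconnected x y).some
  cases r with
  | nil => exact absurd rfl hxy
  | cons h _ => exact ⟨_, h⟩

lemma aux_unique_edge (hconn : G.Connected) (h1 : ∀ x, G.degree x ≤ 1)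
    {a b c d : V} (hab : G.Adj a b) (hcd : G.Adj c d) : s(a, b) = s(c, d) := by
  have hr : ((hconn.preconnected a c).some).bypass.IsPath := Walk.bypass_isPath _
  revert hr
  generalize ((hconn.preconnected a c).some).bypass = r
  intro hr
  cases r with
  | nil =>
    rw [aux_unique_nbr (h1 a) hab hcd]
  | @cons _ z _ h r' =>
    have hzb : z = b := aux_unique_nbr (h1 a) h hab
    subst hzb
    cases r' with
    | nil =>
      have hda : d = a := aux_unique_nbr (h1 c) hcd hab.symm
      subst hda
      exact Sym2.eq_swap
    | @cons _ y _ h2 r'' =>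
      have : y = a := aux_unique_nbr (h1 z) h2 hab.symm
      subst this
      have := hr.support_nodup
      simp [Walk.support_cons] at this

lemma aux_consec (htree : G.IsTree) :
    ∀ {u v : V} (w : G.Walk u v), w.IsPath → ∀ x y, x ∈ w.support → y ∈ w.support →
    G.Adj x y →
    (w.support.idxOf y = w.support.idxOf x + 1 ∨
     w.support.idxOf x = w.support.idxOf y + 1)
  | u, _, Walk.nil, hw, x, y, hx, hy, hxy => by
    simp at hx hy
    subst hx; subst hy
    exact absurd hxy (G.loopless.irrefl _)
  | u, v, Walk.cons (v := b) h w', hw, x, y, hx, hy, hxy => by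
    have hw'p : w'.IsPath := ((Walk.cons_isPath_iff _ _).mp hw).1
    have hu : u ∉ w'.support := ((Walk.cons_isPath_iff _ _).mp hw).2
    have key : ∀ t, t ∈ w'.support → G.Adj u t → t = b := by
      intro t ht hadj
      by_contra htb
      obtain ⟨p0, _, hu0⟩ := htree.existsUnique_path u t
      have hut : u ≠ t := by rintro rfl; exact hu ht
      have hpath1 : (Walk.cons hadj Walk.nil).IsPath := by simp [hut]
      have hpath2 : (Walk.cons h (w'.takeUntil t ht)).IsPath := by
        rw [Walk.cons_isPath_iff]
        refine ⟨hw'p.takeUntil ht, fun hmem => hu (Walk.support_takeUntil_subset _ ht hmem)⟩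
      have e1 := hu0 _ hpath1
      have e2 := hu0 _ hpath2
      have hlen := congrArg Walk.length (e1.trans e2.symm)
      simp [Walk.length_cons] at hlen
      exact htb hlen.symm
    rw [Walk.support_cons] at hx hy ⊢
    rcases List.mem_cons.mp hx with rfl | hx'
    · rcases List.mem_cons.mp hy with rfl | hy'
      · exact absurd hxy (G.loopless.irrefl _)
      · have hyb : y = b := key y hy' hxy
        subst hyb
        left
        rw [List.idxOf_cons_self]
        have hyne : x ≠ y := by rintro rfl; exact hu hy'
        rw [List.idxOf_cons_ne _ hyne]
        have : w'.support.idxOf y = 0 := by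
          rw [w'.support_eq_cons]; exact List.idxOf_cons_self
        omega
    · rcases List.mem_cons.mp hy with rfl | hy'
      · have hxb : x = b := key x hx' hxy.symm
        subst hxb
        right
        rw [List.idxOf_cons_self]
        have hxne : y ≠ x := by rintro rfl; exact hu hx'
        rw [List.idxOf_cons_ne _ hxne]
        have : w'.support.idxOf x = 0 := by
          rw [w'.support_eq_cons]; exact List.idxOf_cons_self
        omega
      · have hxu : x ≠ u := by rintro rfl; exact hu hx'
        have hyu : y ≠ u := by rintro rfl; exact hu hy'
        rcases aux_consec htree w' hw'p x y hx' hy' hxy with hc | hc <;>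
          [left; right] <;> rw [List.idxOf_cons_ne _ (Ne.symm hxu), List.idxOf_cons_ne _ (Ne.symm hyu)] <;> omega

end bwd

lemma aux_nat {M a b c d : ℕ} (hc : c < M) (hd : d < M) (h : a * M + c = b * M + d) :
    a = b ∧ c = d := by
  have hab : a = b := by
    rcases lt_trichotomy a b with hlt | heq | hlt
    · nlinarith
    · exact heq
    · nlinarith
  subst hab
  exact ⟨rfl, Nat.add_left_cancel h⟩

section bwd2
variable [Fintype V] [DecidableEq V] [DecidableRel G.Adj]

lemma aux_backward (hconn : G.Connected) (hbip : G.Colorable 2)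
    (htree : G.IsTree) {u v : V} (w : G.Walk u v) (hw : w.IsPath)
    (hwN : ∀ x : V, 2 ≤ G.degree x → x ∈ w.support) :
    ∃ (X : Set V) (π : V → ℕ), Injective π ∧
      (∀ a b : V, G.Adj a b → (a ∈ X ↔ b ∉ X)) ∧
      ∀ a b c d : V, G.Adj a b → G.Adj c d → a ∈ X → c ∈ X →
        s(a, b) ≠ s(c, d) →
        ¬ ((π a < π c ∧ π d < π b) ∨ (π c < π a ∧ π b < π d)) := by
  classical
  obtain ⟨C⟩ := hbip
  refine ⟨{v | C v = 0}, ?_⟩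
  have hbipX : ∀ a b : V, G.Adj a b → (a ∈ {v | C v = 0} ↔ b ∉ {v | C v = 0}) := by
    intro a b hab
    have hne := C.valid hab
    simp only [Set.mem_setOf_eq]
    revert hne
    generalize C a = i
    generalize C b = j
    fin_cases i <;> fin_cases j <;> simp
  by_cases hx0 : ∃ x0, 2 ≤ G.degree x0
  swap
  · -- small graphs : at most one edge
    push_neg at hx0
    have h1 : ∀ x, G.degree x ≤ 1 := fun x => by have := hx0 x; omega
    refine ⟨fun v => ((Fintype.equivFin V) v : ℕ), ?_, hbipX, ?_⟩
    · intro x y h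
      exact (Fintype.equivFin V).injective (Fin.val_injective h)
    · intro a b c d hab hcd _ _ hne _
      exact hne (aux_unique_edge hconn h1 hab hcd)
  obtain ⟨x0, hx0⟩ := hx0
  set S := w.support with hS
  have hx0S : x0 ∈ S := hwN x0 hx0
  have hdeg1 : ∀ x, x ∉ S → G.degree x ≤ 1 := by
    intro x hx
    by_contra hc
    exact hx (hwN x (by omega))
  have hattach : ∀ x, x ∉ S → ∃ y, G.Adj x y ∧ y ∈ S ∧ ∀ z, G.Adj x z → z = y := by
    intro x hx
    have hxx0 : x ≠ x0 := by rintro rfl; exact hx hx0S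
    obtain ⟨y, hy⟩ := aux_first_step hconn hxx0
    have huq : ∀ z, G.Adj x z → z = y := fun z hz => aux_unique_nbr (hdeg1 x hx) hz hy
    refine ⟨y, hy, ?_, huq⟩
    by_contra hyS
    have hdy := hdeg1 y hyS
    have hyx0 : y ≠ x0 := by
      rintro rfl
      omega
    have hr : ((hconn.preconnected y x0).some).bypass.IsPath := Walk.bypass_isPath _
    revert hr
    generalize ((hconn.preconnected y x0).some).bypass = r
    intro hr
    cases r with
    | nil => exact hyx0 rfl
    | @cons _ t _ h r' =>
      have htx : x = t := (aux_unique_nbr hdy h hy.symm).symm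
      subst htx
      cases r' with
      | nil => exact hxx0 rfl
      | @cons _ s2 _ h2 r'' =>
        have hs2 : y = s2 := (aux_unique_nbr (hdeg1 x hx) h2 hy).symm
        subst hs2
        have := hr.support_nodup
        simp [Walk.support_cons] at this
  have hex : ∀ x, ∃ y, (x ∈ S → y = x) ∧
      (x ∉ S → (G.Adj x y ∧ y ∈ S ∧ ∀ z, G.Adj x z → z = y)) := by
    intro x
    by_cases h : x ∈ S
    · exact ⟨x, fun _ => rfl, fun h' => absurd h h'⟩
    · obtain ⟨y, h1, h2, h3⟩ := hattach x h
      exact ⟨y, fun h' => absurd h' h, fun _ => ⟨h1, h2, h3⟩⟩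
  choose sp hsp1 hsp2 using hex
  have hspS : ∀ x, sp x ∈ S := by
    intro x
    by_cases h : x ∈ S
    · rw [hsp1 x h]; exact h
    · exact (hsp2 x h).2.1
  set M := Fintype.card V + 2 with hM
  set σ : V → ℕ := fun x => S.idxOf (sp x) with hσdef
  set ρ : V → ℕ := fun x => if x ∈ S then 0 else ((Fintype.equivFin V) x : ℕ) + 1 with hρdef
  set πf : V → ℕ := fun x => σ x * M + ρ x with hπdef
  have hρM : ∀ x, ρ x < M := by
    intro x
    simp only [hρdef, hM]
    split
    · omega
    · have := ((Fintype.equivFin V) x).isLt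
      omega
  have hσspine : ∀ x ∈ S, σ x = S.idxOf x := by
    intro x hx
    simp [hσdef, hsp1 x hx]
  have hπinj : Injective πf := by
    intro x y h
    simp only [hπdef] at h
    obtain ⟨hσe, hρe⟩ := aux_nat (hρM x) (hρM y) h
    by_cases hxS : x ∈ S <;> by_cases hyS : y ∈ S
    · have : S.idxOf x = S.idxOf y := by
        rw [← hσspine x hxS, ← hσspine y hyS]; exact hσe
      exact (List.idxOf_inj hxS).mp this
    · simp [hρdef, hxS, hyS] at hρe
    · simp [hρdef, hxS, hyS] at hρe
    · simp only [hρdef, hxS, hyS, if_neg, if_false] at hρe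
      have : ((Fintype.equivFin V) x : ℕ) = ((Fintype.equivFin V) y : ℕ) := by omega
      exact (Fintype.equivFin V).injective (Fin.val_injective this)
  have hclass : ∀ a b, G.Adj a b →
      (a ∈ S ∧ b ∈ S ∧ (σ b = σ a + 1 ∨ σ a = σ b + 1)) ∨
      (a ∉ S ∧ b ∈ S ∧ sp a = b) ∨ (b ∉ S ∧ a ∈ S ∧ sp b = a) := by
    intro a b hab
    by_cases haS : a ∈ S <;> by_cases hbS : b ∈ S
    · left
      refine ⟨haS, hbS, ?_⟩
      have := aux_consec htree w hw a b haS hbS hab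
      rw [hσspine a haS, hσspine b hbS]
      exact this
    · right; right
      exact ⟨hbS, haS, ((hsp2 b hbS).2.2 a hab.symm).symm⟩
    · right; left
      exact ⟨haS, hbS, ((hsp2 a haS).2.2 b hab).symm⟩
    · exfalso
      have := (hsp2 a haS).2.2 b hab
      exact hbS (this ▸ hspS a)
  have hbound : ∀ a b, G.Adj a b →
      min (σ a) (σ b) * M ≤ πf a ∧ πf a ≤ (min (σ a) (σ b) + 1) * M ∧
      min (σ a) (σ b) * M ≤ πf b ∧ πf b ≤ (min (σ a) (σ b) + 1) * M := by
    intro a b hab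
    have hρa := hρM a
    have hρb := hρM b
    rcases hclass a b hab with ⟨haS, hbS, hor⟩ | ⟨haS, hbS, hsep⟩ | ⟨hbS, haS, hsep⟩
    · have hra : ρ a = 0 := by simp [hρdef, haS]
      have hrb : ρ b = 0 := by simp [hρdef, hbS]
      simp only [hπdef, hra, hrb, add_zero]
      rcases hor with h | h
      · rw [h]
        have hmin : min (σ a) (σ a + 1) = σ a := by omega
        rw [hmin]
        refine ⟨le_refl _, ?_, ?_, le_refl _⟩ <;> exact Nat.mul_le_mul_right _ (by omega)
      · rw [h]
        have hmin : min (σ b + 1) (σ b) = σ b := by omega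
        rw [hmin]
        refine ⟨?_, le_refl _, le_refl _, ?_⟩ <;> exact Nat.mul_le_mul_right _ (by omega)
    · -- a is a leaf attached to b
      have hσe : σ a = σ b := by
        simp [hσdef, hsep, hsp1 b hbS]
      have hrb : ρ b = 0 := by simp [hρdef, hbS]
      simp only [hπdef, hσe, hrb, add_zero, min_self]
      constructor
      · omega
      constructor
      · have : (σ b + 1) * M = σ b * M + M := by ring
        omega
      constructor
      · omega
      · nlinarith
    · have hσe : σ b = σ a := by
        simp [hσdef, hsep, hsp1 a haS]
      have hra : ρ a = 0 := by simp [hρdef, haS]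
      simp only [hπdef, hσe, hra, add_zero, min_self]
      refine ⟨le_refl _, by nlinarith, by omega, ?_⟩
      have : (σ a + 1) * M = σ a * M + M := by ring
      omega
  have hlow : ∀ a b, G.Adj a b → ∃ s, (s = a ∨ s = b) ∧ s ∈ S ∧
      S.idxOf s = min (σ a) (σ b) := by
    intro a b hab
    rcases hclass a b hab with ⟨haS, hbS, hor⟩ | ⟨haS, hbS, hsep⟩ | ⟨hbS, haS, hsep⟩
    · rcases hor with h | h
      · exact ⟨a, Or.inl rfl, haS, by rw [← hσspine a haS]; omega⟩
      · exact ⟨b, Or.inr rfl, hbS, by rw [← hσspine b hbS]; omega⟩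
    · have hσe : σ a = σ b := by simp [hσdef, hsep, hsp1 b hbS]
      exact ⟨b, Or.inr rfl, hbS, by rw [← hσspine b hbS]; omega⟩
    · have hσe : σ b = σ a := by simp [hσdef, hsep, hsp1 a haS]
      exact ⟨a, Or.inl rfl, haS, by rw [← hσspine a haS]; omega⟩
  have hint : ∀ a b c d, G.Adj a b → G.Adj c d → a ≠ c → a ≠ d → b ≠ c → b ≠ d →
      (πf a ≤ πf c ∧ πf a ≤ πf d ∧ πf b ≤ πf c ∧ πf b ≤ πf d) ∨
      (πf c ≤ πf a ∧ πf d ≤ πf a ∧ πf c ≤ πf b ∧ πf d ≤ πf b) := by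
    intro a b c d hab hcd hac had hbc hbd
    obtain ⟨h1a, h2a, h1b, h2b⟩ := hbound a b hab
    obtain ⟨h1c, h2c, h1d, h2d⟩ := hbound c d hcd
    rcases lt_trichotomy (min (σ a) (σ b)) (min (σ c) (σ d)) with hlt | heq | hlt
    · left
      have hstep : (min (σ a) (σ b) + 1) * M ≤ min (σ c) (σ d) * M :=
        Nat.mul_le_mul_right _ (by omega)
      exact ⟨le_trans h2a (le_trans hstep h1c), le_trans h2a (le_trans hstep h1d),
        le_trans h2b (le_trans hstep h1c), le_trans h2b (le_trans hstep h1d)⟩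
    · exfalso
      obtain ⟨s1, hs1or, hs1S, hs1i⟩ := hlow a b hab
      obtain ⟨s2, hs2or, hs2S, hs2i⟩ := hlow c d hcd
      have hss : s1 = s2 := by
        apply (List.idxOf_inj hs1S).mp
        rw [hs1i, hs2i, heq]
      rcases hs1or with h1 | h1 <;> rcases hs2or with h2 | h2
      · exact hac ((h1.symm.trans hss).trans h2)
      · exact had ((h1.symm.trans hss).trans h2)
      · exact hbc ((h1.symm.trans hss).trans h2)
      · exact hbd ((h1.symm.trans hss).trans h2)
    · right
      have hstep : (min (σ c) (σ d) + 1) * M ≤ min (σ a) (σ b) * M :=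
        Nat.mul_le_mul_right _ (by omega)
      exact ⟨le_trans h2c (le_trans hstep h1a), le_trans h2d (le_trans hstep h1a),
        le_trans h2c (le_trans hstep h1b), le_trans h2d (le_trans hstep h1b)⟩
  refine ⟨πf, hπinj, hbipX, ?_⟩
  intro a b c d hab hcd haX hcX hne hpat
  have hac : a ≠ c := by
    rintro rfl
    rcases hpat with ⟨h, _⟩ | ⟨h, _⟩ <;> exact lt_irrefl _ h
  have hbd : b ≠ d := by
    rintro rfl
    rcases hpat with ⟨_, h⟩ | ⟨_, h⟩ <;> exact lt_irrefl _ h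
  have had : a ≠ d := by
    rintro rfl
    exact ((hbipX c a hcd).mp hcX) haX
  have hbc : b ≠ c := by
    rintro rfl
    exact ((hbipX a b hab).mp haX) hcX
  rcases hint a b c d hab hcd hac had hbc hbd with ⟨h1, h2, h3, h4⟩ | ⟨h1, h2, h3, h4⟩ <;>
    rcases hpat with ⟨p1, p2⟩ | ⟨p1, p2⟩ <;> omega

end bwd2

end AuxLemmas2

/-- A connected bipartite graph admits a 2-layer 0-planar drawing (a 2-layer
drawing with no crossings, for some bipartition `X` and orders on the two
layers) iff it is a caterpillar. -/
theorem stmt18 {V : Type*} [Fintype V] [DecidableEq V]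
    (G : SimpleGraph V) [DecidableRel G.Adj]
    (hconn : G.Connected) (hbip : G.Colorable 2) :
    (∃ (X : Set V) (π : V → ℕ), Injective π ∧
      (∀ a b : V, G.Adj a b → (a ∈ X ↔ b ∉ X)) ∧
      ∀ a b c d : V, G.Adj a b → G.Adj c d → a ∈ X → c ∈ X →
        s(a, b) ≠ s(c, d) →
        ¬ ((π a < π c ∧ π d < π b) ∨ (π c < π a ∧ π b < π d))) ↔
    IsCaterpillar G := by
  constructor
  · rintro ⟨X, π, hinj, hbipX, hcross⟩
    exact aux_forward hconn hinj hbipX hcross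
  · rintro ⟨htree, u, v, w, hw, hwN⟩
    exact aux_backward hconn hbip htree w hw hwN
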